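/- Fix λ ∈ ℝ, λ ≠ 0, and consider the Hom-Lie superalgebra osp(1,2)_λ. Every bilinear super skew-symmetric map f : osp(1,2) × osp(1,2) → ℂ satisfying f(α_λ(x),α_λ(y)) = f(x,y) for all x,y and the 2-cocycle condition −f([x₀,x₁]_λ, α_λ(x₂)) + (−1)^{|x₂||x₁|} f([x₀,x₂]_λ, α_λ(x₁)) + f(α_λ(x₀), [x₁,x₂]_λ) = 0 for all homogeneous x₀,x₁,x₂, is a coboundary: there exists a linear map g : osp(1,2) → ℂ with g∘α_λ = g such that f(x,y) = −g([x,y]_λ) for all x,y. Hence H²(osp(1,2)_λ, ℂ) = {0}. -/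

import Mathlib

/-- A Hom-Lie superalgebra structure. -/
def IsHomLieSuper {K G : Type*} [Field K] [AddCommGroup G] [Module K G]
    (Gr : ZMod 2 → Submodule K G) (br : G → G → G) (α : G → G) : Prop :=
  IsLinearMap K α ∧
  (∀ x : G, IsLinearMap K (br x)) ∧
  (∀ y : G, IsLinearMap K fun x => br x y) ∧
  (∀ i j : ZMod 2, ∀ x ∈ Gr i, ∀ y ∈ Gr j, br x y ∈ Gr (i + j)) ∧
  (∀ i : ZMod 2, ∀ x ∈ Gr i, α x ∈ Gr i) ∧
  (∀ i j : ZMod 2, ∀ x ∈ Gr i, ∀ y ∈ Gr j,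
      br x y = (-((-1 : K) ^ (i.val * j.val))) • br y x) ∧
  (∀ i j l : ZMod 2, ∀ x ∈ Gr i, ∀ y ∈ Gr j, ∀ z ∈ Gr l,
      ((-1 : K) ^ (i.val * l.val)) • br (α x) (br y z) +
      ((-1 : K) ^ (l.val * j.val)) • br (α z) (br x y) +
      ((-1 : K) ^ (j.val * i.val)) • br (α y) (br z x) = 0)

/-- The grading of `osp(1,2)`: with basis `b 0 = H, b 1 = X, b 2 = Y` (even) and
`b 3 = F, b 4 = G` (odd). -/
def ospGr {V : Type*} [AddCommGroup V] [Module ℂ V] (b : Module.Basis (Fin 5) ℂ V) :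
    ZMod 2 → Submodule ℂ V :=
  fun i => if i = 0 then Submodule.span ℂ {b 0, b 1, b 2} else Submodule.span ℂ {b 3, b 4}

set_option maxHeartbeats 1600000 in
/-- Every scalar 2-cocycle of the Hom-Lie superalgebra `osp(1,2)_λ`
(`λ ∈ ℝ, λ ≠ 0`) is a coboundary; hence `H²(osp(1,2)_λ, ℂ) = 0`. -/
theorem osp12_second_cohomology_trivial
    (lam : ℝ) (hlam : lam ≠ 0)
    (V : Type*) [AddCommGroup V] [Module ℂ V] (b : Module.Basis (Fin 5) ℂ V)
    (br : V → V → V) (α : V → V)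
    (hHL : IsHomLieSuper (ospGr b) br α)
    -- the twist map α_λ
    (hαH : α (b 0) = b 0)
    (hαX : α (b 1) = ((lam : ℂ) ^ 2) • b 1)
    (hαY : α (b 2) = (((lam : ℂ) ^ 2)⁻¹) • b 2)
    (hαF : α (b 3) = ((lam : ℂ)⁻¹) • b 3)
    (hαG : α (b 4) = (lam : ℂ) • b 4)
    -- the bracket [·,·]_λ
    (hHX : br (b 0) (b 1) = (2 * (lam : ℂ) ^ 2) • b 1)
    (hHY : br (b 0) (b 2) = (-(2 / (lam : ℂ) ^ 2)) • b 2)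
    (hXY : br (b 1) (b 2) = b 0)
    (hYG : br (b 2) (b 4) = ((lam : ℂ)⁻¹) • b 3)
    (hXF : br (b 1) (b 3) = (lam : ℂ) • b 4)
    (hHF : br (b 0) (b 3) = (-(lam : ℂ)⁻¹) • b 3)
    (hHG : br (b 0) (b 4) = (lam : ℂ) • b 4)
    (hGF : br (b 4) (b 3) = b 0)
    (hGX : br (b 4) (b 1) = 0)
    (hYF : br (b 2) (b 3) = 0)
    (hGG : br (b 4) (b 4) = (-(2 * (lam : ℂ) ^ 2)) • b 1)
    (hFF : br (b 3) (b 3) = (2 / (lam : ℂ) ^ 2) • b 2)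
    -- a scalar 2-cochain
    (f : V → V → ℂ)
    (hf1 : ∀ x, IsLinearMap ℂ (f x)) (hf2 : ∀ y, IsLinearMap ℂ fun x => f x y)
    (hfskew : ∀ (i j : ZMod 2), ∀ x ∈ ospGr b i, ∀ y ∈ ospGr b j,
        f x y = -((-1 : ℂ) ^ (i.val * j.val)) * f y x)
    (hfα : ∀ x y, f (α x) (α y) = f x y)
    -- the 2-cocycle condition
    (hco : ∀ (i j l : ZMod 2), ∀ x₀ ∈ ospGr b i, ∀ x₁ ∈ ospGr b j, ∀ x₂ ∈ ospGr b l,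
        -f (br x₀ x₁) (α x₂) + ((-1 : ℂ) ^ (l.val * j.val)) * f (br x₀ x₂) (α x₁) +
          f (α x₀) (br x₁ x₂) = 0) :
    ∃ g : V → ℂ, IsLinearMap ℂ g ∧ (∀ x, g (α x) = g x) ∧
      ∀ x y, f x y = -g (br x y) := by
  obtain ⟨hαlin, hbr1, hbr2, -, -, hskew, -⟩ := hHL
  obtain ⟨L, hLdef⟩ : ∃ L : ℂ, L = (lam : ℂ) := ⟨_, rfl⟩
  have hL : L ≠ 0 := by rw [hLdef]; exact_mod_cast hlam
  rw [← hLdef] at hαX hαY hαF hαG hHX hHY hYG hXF hHF hHG hGG hFF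
  have hsp0 : ospGr b (0 : ZMod 2) = Submodule.span ℂ {b 0, b 1, b 2} := rfl
  have hsp1 : ospGr b (1 : ZMod 2) = Submodule.span ℂ {b 3, b 4} := rfl
  have m0 : b 0 ∈ ospGr b (0 : ZMod 2) := by rw [hsp0]; exact Submodule.subset_span (by simp)
  have m1 : b 1 ∈ ospGr b (0 : ZMod 2) := by rw [hsp0]; exact Submodule.subset_span (by simp)
  have m2 : b 2 ∈ ospGr b (0 : ZMod 2) := by rw [hsp0]; exact Submodule.subset_span (by simp)
  have m3 : b 3 ∈ ospGr b (1 : ZMod 2) := by rw [hsp1]; exact Submodule.subset_span (by simp)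
  have m4 : b 4 ∈ ospGr b (1 : ZMod 2) := by rw [hsp1]; exact Submodule.subset_span (by simp)
  have fL : ∀ (c : ℂ) (x y : V), f (c • x) y = c * f x y := fun c x y => by
    simpa [smul_eq_mul] using (hf2 y).map_smul c x
  have fR : ∀ (c : ℂ) (x y : V), f x (c • y) = c * f x y := fun c x y => by
    simpa [smul_eq_mul] using (hf1 x).map_smul c y
  have f0R : ∀ x : V, f x 0 = 0 := fun x => (hf1 x).map_zero
  have f0L : ∀ y : V, f 0 y = 0 := fun y => (hf2 y).map_zero
  have val1 : (1 : ZMod 2).val = 1 := rfl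
  have val0 : (0 : ZMod 2).val = 0 := rfl
  have negself : ∀ x : V, x = -x → x = 0 := by
    intro x h
    have h2 : (2:ℂ) • x = 0 := by rw [two_smul]; nth_rewrite 2 [h]; simp
    calc x = (2⁻¹ : ℂ) • ((2:ℂ) • x) := by rw [smul_smul]; norm_num
    _ = 0 := by rw [h2, smul_zero]
  -- skew-symmetry facts
  have sXH : f (b 1) (b 0) = -f (b 0) (b 1) := by simpa [val0, val1] using hfskew 0 0 (b 1) m1 (b 0) m0
  have sYH : f (b 2) (b 0) = -f (b 0) (b 2) := by simpa [val0, val1] using hfskew 0 0 (b 2) m2 (b 0) m0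
  have sYX : f (b 2) (b 1) = -f (b 1) (b 2) := by simpa [val0, val1] using hfskew 0 0 (b 2) m2 (b 1) m1
  have sFH : f (b 3) (b 0) = -f (b 0) (b 3) := by simpa [val0, val1] using hfskew 1 0 (b 3) m3 (b 0) m0
  have sFX : f (b 3) (b 1) = -f (b 1) (b 3) := by simpa [val0, val1] using hfskew 1 0 (b 3) m3 (b 1) m1
  have sFY : f (b 3) (b 2) = -f (b 2) (b 3) := by simpa [val0, val1] using hfskew 1 0 (b 3) m3 (b 2) m2
  have sGH : f (b 4) (b 0) = -f (b 0) (b 4) := by simpa [val0, val1] using hfskew 1 0 (b 4) m4 (b 0) m0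
  have sGX : f (b 4) (b 1) = -f (b 1) (b 4) := by simpa [val0, val1] using hfskew 1 0 (b 4) m4 (b 1) m1
  have sGY : f (b 4) (b 2) = -f (b 2) (b 4) := by simpa [val0, val1] using hfskew 1 0 (b 4) m4 (b 2) m2
  have sFG : f (b 3) (b 4) = f (b 4) (b 3) := by
    simpa [val0, val1] using hfskew 1 1 (b 3) m3 (b 4) m4
  have dH : f (b 0) (b 0) = 0 := by
    have h := hfskew 0 0 (b 0) m0 (b 0) m0
    simp [val0] at h
    linear_combination (1/2 : ℂ) * h
  have dX : f (b 1) (b 1) = 0 := by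
    have h := hfskew 0 0 (b 1) m1 (b 1) m1
    simp [val0] at h
    linear_combination (1/2 : ℂ) * h
  have dY : f (b 2) (b 2) = 0 := by
    have h := hfskew 0 0 (b 2) m2 (b 2) m2
    simp [val0] at h
    linear_combination (1/2 : ℂ) * h
  -- bracket flips
  have bXH : br (b 1) (b 0) = -br (b 0) (b 1) := by simpa [val0, val1] using hskew 0 0 (b 1) m1 (b 0) m0
  have bYH : br (b 2) (b 0) = -br (b 0) (b 2) := by simpa [val0, val1] using hskew 0 0 (b 2) m2 (b 0) m0
  have bYX : br (b 2) (b 1) = -br (b 1) (b 2) := by simpa [val0, val1] using hskew 0 0 (b 2) m2 (b 1) m1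
  have bFH : br (b 3) (b 0) = -br (b 0) (b 3) := by simpa [val0, val1] using hskew 1 0 (b 3) m3 (b 0) m0
  have bFX : br (b 3) (b 1) = -br (b 1) (b 3) := by simpa [val0, val1] using hskew 1 0 (b 3) m3 (b 1) m1
  have bFY : br (b 3) (b 2) = -br (b 2) (b 3) := by simpa [val0, val1] using hskew 1 0 (b 3) m3 (b 2) m2
  have bGH : br (b 4) (b 0) = -br (b 0) (b 4) := by simpa [val0, val1] using hskew 1 0 (b 4) m4 (b 0) m0
  have bGY : br (b 4) (b 2) = -br (b 2) (b 4) := by simpa [val0, val1] using hskew 1 0 (b 4) m4 (b 2) m2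
  have bXG : br (b 1) (b 4) = -br (b 4) (b 1) := by simpa [val0, val1] using hskew 0 1 (b 1) m1 (b 4) m4
  have bFG : br (b 3) (b 4) = br (b 4) (b 3) := by simpa [val0, val1] using hskew 1 1 (b 3) m3 (b 4) m4
  have bHH : br (b 0) (b 0) = 0 := by
    have h := hskew 0 0 (b 0) m0 (b 0) m0
    simp [val0] at h
    exact negself _ h
  have bXX : br (b 1) (b 1) = 0 := by
    have h := hskew 0 0 (b 1) m1 (b 1) m1
    simp [val0] at h
    exact negself _ h
  have bYY : br (b 2) (b 2) = 0 := by
    have h := hskew 0 0 (b 2) m2 (b 2) m2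
    simp [val0] at h
    exact negself _ h
  have fnegL : ∀ x y : V, f (-x) y = -f x y := fun x y => (hf2 y).map_neg x
  have fnegR : ∀ x y : V, f x (-y) = -f x y := fun x y => (hf1 x).map_neg y
  -- alpha-invariance consequences
  have invX : L ^ 2 * f (b 0) (b 1) = f (b 0) (b 1) := by
    have h := hfα (b 0) (b 1); rw [hαH, hαX, fR] at h; exact h
  have invY : (L ^ 2)⁻¹ * f (b 0) (b 2) = f (b 0) (b 2) := by
    have h := hfα (b 0) (b 2); rw [hαH, hαY, fR] at h; exact h
  have invF : L⁻¹ * f (b 0) (b 3) = f (b 0) (b 3) := by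
    have h := hfα (b 0) (b 3); rw [hαH, hαF, fR] at h; exact h
  have invG : L * f (b 0) (b 4) = f (b 0) (b 4) := by
    have h := hfα (b 0) (b 4); rw [hαH, hαG, fR] at h; exact h
  -- cocycle identities
  have cXG : f (b 1) (b 4) = 0 := by
    have h := hco 0 1 0 (b 0) m0 (b 4) m4 (b 1) m1
    rw [hHG, hHX, hGX, hαH, hαX, hαG] at h
    simp only [val0, val1, fL, fR, f0R, sGX] at h
    have h3 : (3:ℂ) * L^3 * f (b 1) (b 4) = 0 := by linear_combination h
    rcases mul_eq_zero.mp h3 with h4 | h4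
    · exact absurd h4 (mul_ne_zero (by norm_num) (pow_ne_zero 3 hL))
    · exact h4
  have cYF : f (b 2) (b 3) = 0 := by
    have h := hco 0 0 1 (b 0) m0 (b 2) m2 (b 3) m3
    rw [hHY, hHF, hYF, hαH, hαY, hαF] at h
    simp only [val0, val1, fL, fR, f0R, sFY] at h
    field_simp [hL] at h
    have h3 : (3:ℂ) * L^3 * f (b 2) (b 3) = 0 := by linear_combination L^3 * h
    rcases mul_eq_zero.mp h3 with h4 | h4
    · exact absurd h4 (mul_ne_zero (by norm_num) (pow_ne_zero 3 hL))
    · exact h4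
  have cYG : f (b 2) (b 4) = -f (b 0) (b 3) := by
    have h := hco 0 0 1 (b 0) m0 (b 2) m2 (b 4) m4
    rw [hHY, hHG, hYG, hαH, hαY, hαG] at h
    simp only [val0, val1, fL, fR, sGY] at h
    field_simp [hL] at h
    have h3 : L^2 * (f (b 2) (b 4) + f (b 0) (b 3)) = 0 := by linear_combination L^2 * h
    rcases mul_eq_zero.mp h3 with h4 | h4
    · exact absurd h4 (pow_ne_zero 2 hL)
    · linear_combination h4
  have cXF : f (b 1) (b 3) = f (b 0) (b 4) := by
    have h := hco 0 0 1 (b 0) m0 (b 1) m1 (b 3) m3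
    rw [hHX, hHF, hXF, hαH, hαX, hαF] at h
    simp only [val0, val1, fL, fR, sFX] at h
    field_simp [hL] at h
    have h3 : L^3 * (f (b 0) (b 4) - f (b 1) (b 3)) = 0 := by linear_combination L^2 * h
    rcases mul_eq_zero.mp h3 with h4 | h4
    · exact absurd h4 (pow_ne_zero 3 hL)
    · linear_combination -h4
  have cGF : f (b 4) (b 3) = f (b 1) (b 2) := by
    have h := hco 0 1 1 (b 1) m1 (b 3) m3 (b 3) m3
    rw [hXF, hFF, hαX, hαF] at h
    simp only [val0, val1, fL, fR] at h
    field_simp [hL] at h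
    linear_combination (-1/2 : ℂ) * h
  have cGG : f (b 4) (b 4) = -f (b 0) (b 1) := by
    have h := hco 1 1 0 (b 4) m4 (b 4) m4 (b 0) m0
    rw [hGG, bGH, hHG, hαH, hαG] at h
    simp only [val0, val1, fL, fR, fnegL, fnegR, sXH] at h
    have h3 : (2:ℂ) * L^2 * (f (b 4) (b 4) + f (b 0) (b 1)) = 0 := by linear_combination -h
    rcases mul_eq_zero.mp h3 with h4 | h4
    · exact absurd h4 (mul_ne_zero (by norm_num) (pow_ne_zero 2 hL))
    · linear_combination h4
  have cFF : f (b 3) (b 3) = -f (b 0) (b 2) := by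
    have h := hco 1 1 0 (b 3) m3 (b 3) m3 (b 0) m0
    rw [hFF, bFH, hHF, hαH, hαF] at h
    simp only [val0, val1, fL, fR, fnegL, fnegR, sYH] at h
    field_simp [hL] at h
    have h3 : (2:ℂ) * L^4 * (f (b 3) (b 3) + f (b 0) (b 2)) = 0 := by linear_combination L^4 * h
    rcases mul_eq_zero.mp h3 with h4 | h4
    · exact absurd h4 (mul_ne_zero (by norm_num) (pow_ne_zero 4 hL))
    · linear_combination h4
  -- polynomial versions of invariance
  have invY' : f (b 0) (b 2) = L ^ 2 * f (b 0) (b 2) := by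
    have h : L ^ 2 * ((L ^ 2)⁻¹ * f (b 0) (b 2)) = L ^ 2 * f (b 0) (b 2) := by rw [invY]
    rw [← mul_assoc, mul_inv_cancel₀ (pow_ne_zero 2 hL), one_mul] at h
    exact h
  have invF' : f (b 0) (b 3) = L * f (b 0) (b 3) := by
    have h : L * (L⁻¹ * f (b 0) (b 3)) = L * f (b 0) (b 3) := by rw [invF]
    rw [← mul_assoc, mul_inv_cancel₀ hL, one_mul] at h
    exact h
  -- the cobounding linear functional
  obtain ⟨gl, g0, g1, g2, g3, g4⟩ :
      ∃ gl : V →ₗ[ℂ] ℂ, gl (b 0) = -f (b 1) (b 2) ∧ gl (b 1) = -f (b 0) (b 1) / (2 * L ^ 2) ∧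
        gl (b 2) = f (b 0) (b 2) * L ^ 2 / 2 ∧ gl (b 3) = L * f (b 0) (b 3) ∧
        gl (b 4) = -f (b 0) (b 4) / L := by
    refine ⟨b.constr ℂ ![-f (b 1) (b 2), -f (b 0) (b 1) / (2 * L ^ 2),
        f (b 0) (b 2) * L ^ 2 / 2, L * f (b 0) (b 3), -f (b 0) (b 4) / L],
      ?_, ?_, ?_, ?_, ?_⟩ <;> simp [Module.Basis.constr_basis]
  have key : ∀ i j : Fin 5, f (b i) (b j) = -gl (br (b i) (b j)) := by
    intro i j
    fin_cases i <;> fin_cases j <;>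
      (try simp only [Fin.zero_eta, Fin.mk_one, Fin.reduceFinMk]) <;>
      (try simp only [Fin.isValue, hHX, hHY, hXY, hYG, hXF, hHF, hHG, hGF, hGX, hYF, hGG, hFF,
        bXH, bYH, bYX, bFH, bFX, bFY, bGH, bGY, bXG, bFG, bHH, bXX, bYY,
        map_smul, map_neg, map_zero, smul_eq_mul, g0, g1, g2, g3, g4,
        dH, dX, dY, sXH, sYH, sYX, sFH, sFX, sFY, sGH, sGX, sGY, sFG,
        cXG, cYF, cYG, cXF, cGF, cGG, cFF]) <;>
      (first | rfl | ring1 | (field_simp; try ring1))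
  -- bilinear extensions
  obtain ⟨F, hF⟩ : ∃ F : V →ₗ[ℂ] V →ₗ[ℂ] ℂ, ∀ x y, F x y = f x y :=
    ⟨LinearMap.mk₂ ℂ f (fun m₁ m₂ n => (hf2 n).map_add m₁ m₂)
      (fun c m n => (hf2 n).map_smul c m) (fun m n₁ n₂ => (hf1 m).map_add n₁ n₂)
      (fun c m n => (hf1 m).map_smul c n), fun x y => rfl⟩
  obtain ⟨B, hB⟩ : ∃ B : V →ₗ[ℂ] V →ₗ[ℂ] ℂ, ∀ x y, B x y = -gl (br x y) := by
    refine ⟨LinearMap.mk₂ ℂ (fun x y => -gl (br x y))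
      (fun m₁ m₂ n => ?_) (fun c m n => ?_) (fun m n₁ n₂ => ?_) (fun c m n => ?_),
      fun x y => rfl⟩
    · show -gl (br (m₁ + m₂) n) = -gl (br m₁ n) + -gl (br m₂ n)
      rw [show br (m₁ + m₂) n = br m₁ n + br m₂ n from (hbr2 n).map_add m₁ m₂, map_add]; ring
    · show -gl (br (c • m) n) = c • -gl (br m n)
      rw [show br (c • m) n = c • br m n from (hbr2 n).map_smul c m, map_smul, smul_eq_mul,
        smul_eq_mul]; ring
    · show -gl (br m (n₁ + n₂)) = -gl (br m n₁) + -gl (br m n₂)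
      rw [(hbr1 m).map_add, map_add]; ring
    · show -gl (br m (c • n)) = c • -gl (br m n)
      rw [(hbr1 m).map_smul, map_smul, smul_eq_mul, smul_eq_mul]; ring
  have hFB : F = B := LinearMap.ext_basis b b fun i j => by rw [hF, hB]; exact key i j
  refine ⟨fun x => gl x, gl.isLinear, ?_, ?_⟩
  · -- α-invariance of gl
    obtain ⟨A, hA⟩ : ∃ A : V →ₗ[ℂ] V, ∀ x, A x = α x :=
      ⟨IsLinearMap.mk' α hαlin, fun x => rfl⟩
    have e0 : gl (α (b 0)) = gl (b 0) := by rw [hαH]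
    have e1 : gl (α (b 1)) = gl (b 1) := by
      rw [hαX, map_smul, smul_eq_mul, g1]
      field_simp
      first
      | linear_combination (2 * L ^ 2) * invX
      | linear_combination (1 - 2 * L ^ 2) * invX
      | linear_combination (2 * L ^ 2 - 1) * invX
      | linear_combination -invX
      | linear_combination invX
    have e2 : gl (α (b 2)) = gl (b 2) := by
      rw [hαY, map_smul, smul_eq_mul, g2]
      field_simp
      first
      | linear_combination invY'
      | linear_combination -invY'
      | linear_combination (L ^ 2) * invY'
      | linear_combination (-L ^ 2) * invY'
    have e3 : gl (α (b 3)) = gl (b 3) := by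
      rw [hαF, map_smul, smul_eq_mul, g3]
      field_simp
      first
      | linear_combination invF'
      | linear_combination -invF'
      | linear_combination L * invF'
      | linear_combination (-L) * invF'
    have e4 : gl (α (b 4)) = gl (b 4) := by
      rw [hαG, map_smul, smul_eq_mul, g4]
      field_simp
      first
      | exact Or.inl invG
      | linear_combination invG
      | linear_combination -invG
      | linear_combination L * invG
    have hcomp : gl.comp A = gl := by
      refine b.ext fun i => ?_
      fin_cases i
      · rw [LinearMap.comp_apply, hA]; exact e0
      · rw [LinearMap.comp_apply, hA]; exact e1
      · rw [LinearMap.comp_apply, hA]; exact e2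
      · rw [LinearMap.comp_apply, hA]; exact e3
      · rw [LinearMap.comp_apply, hA]; exact e4
    intro x
    have h := DFunLike.congr_fun hcomp x
    simpa [hA] using h
  · intro x y
    have h := DFunLike.congr_fun (DFunLike.congr_fun hFB x) y
    rw [hF, hB] at h
    exact h
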